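/- Let ω = e^{iπ/5} and let U be any 2×2 unitary. Then |⟨1| U·diag(1,ω)·U†·diag(1,−ω^{−2})·U·diag(1,−ω^{−2})·U†·diag(1,ω)·U |0⟩| = |⟨1| U |0⟩|⁵. -/

import Mathlib

set_option maxRecDepth 100000
set_option maxHeartbeats 1000000

open Matrix Complex

theorem stmt_2 (U : Matrix (Fin 2) (Fin 2) ℂ)
    (hU : U ∈ Matrix.unitaryGroup (Fin 2) ℂ) :
    let ω : ℂ := Complex.exp (Real.pi * Complex.I / 5)
    ‖(U * !![(1 : ℂ), 0; 0, ω] * Uᴴ * !![(1 : ℂ), 0; 0, -(ω⁻¹)^2] * U *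
        !![(1 : ℂ), 0; 0, -(ω⁻¹)^2] * Uᴴ * !![(1 : ℂ), 0; 0, ω] * U) 1 0‖
      = ‖U 1 0‖^5 := by
  intro ω
  have hω0 : ω ≠ 0 := Complex.exp_ne_zero _
  have hω5 : ω ^ 5 = -1 := by
    show Complex.exp (Real.pi * Complex.I / 5) ^ 5 = -1
    rw [← Complex.exp_nat_mul]
    have h5 : ((5 : ℕ) : ℂ) * (Real.pi * Complex.I / 5) = Real.pi * Complex.I := by
      push_cast; ring
    rw [h5, Complex.exp_pi_mul_I]
  have hωre : ω.re > 0 := by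
    have h1 : (Real.pi * Complex.I / 5 : ℂ) = (Real.pi / 5 : ℝ) * Complex.I := by
      push_cast; ring
    show (Complex.exp (Real.pi * Complex.I / 5)).re > 0
    rw [h1, Complex.exp_ofReal_mul_I_re]
    apply Real.cos_pos_of_mem_Ioo
    constructor
    · have := Real.pi_pos; linarith
    · have := Real.pi_pos; linarith [Real.pi_gt_three]
  have hωne : ω + 1 ≠ 0 := by
    intro h
    have h' : ω.re + 1 = 0 := by
      have := congrArg Complex.re h
      simpa using this
    linarith
  have hω : ω ^ 4 - ω ^ 3 + ω ^ 2 - ω + 1 = 0 := by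
    have hmul : (ω + 1) * (ω ^ 4 - ω ^ 3 + ω ^ 2 - ω + 1) = ω ^ 5 + 1 := by ring
    have h0 : (ω + 1) * (ω ^ 4 - ω ^ 3 + ω ^ 2 - ω + 1) = 0 := by rw [hmul, hω5]; ring
    exact (mul_eq_zero.mp h0).resolve_left hωne
  have hD2 : -(ω⁻¹) ^ 2 = ω ^ 3 := by
    field_simp
    linear_combination -hω5
  rw [show !![(1 : ℂ), 0; 0, -(ω⁻¹)^2] = !![(1 : ℂ), 0; 0, ω^3] from by rw [hD2]]
  have hs : star U * U = 1 := hU.1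
  have entry : ∀ i j, (star U * U) i j = (1 : Matrix (Fin 2) (Fin 2) ℂ) i j := by
    intro i j; rw [hs]
  have h1 : (starRingEnd ℂ) (U 0 0) * U 0 0 + (starRingEnd ℂ) (U 1 0) * U 1 0 = 1 := by
    simpa [Matrix.mul_apply, Fin.sum_univ_two, Matrix.one_apply,
      Matrix.conjTranspose_apply] using entry 0 0
  have h2 : (starRingEnd ℂ) (U 0 0) * U 0 1 + (starRingEnd ℂ) (U 1 0) * U 1 1 = 0 := by
    simpa [Matrix.mul_apply, Fin.sum_univ_two, Matrix.one_apply,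
      Matrix.conjTranspose_apply] using entry 0 1
  have h4 : (starRingEnd ℂ) (U 0 1) * U 0 1 + (starRingEnd ℂ) (U 1 1) * U 1 1 = 1 := by
    simpa [Matrix.mul_apply, Fin.sum_univ_two, Matrix.one_apply,
      Matrix.conjTranspose_apply] using entry 1 1
  obtain ⟨ε, hε⟩ : ∃ ε : ℂ, ε = U 0 0 * U 1 1 - U 0 1 * U 1 0 := ⟨_, rfl⟩
  have he : (starRingEnd ℂ) ε * ε = 1 := by
    rw [hε]
    simp only [_root_.map_sub, _root_.map_mul]
    linear_combination ((starRingEnd ℂ) (U 0 1) * U 0 1 + (starRingEnd ℂ) (U 1 1) * U 1 1) * h1 +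
      h4 - ((starRingEnd ℂ) (U 0 1) * U 0 0 + (starRingEnd ℂ) (U 1 1) * U 1 0) * h2
  have hb : U 0 1 = -(ε * (starRingEnd ℂ) (U 1 0)) := by
    rw [hε]
    linear_combination U 0 0 * h2 - U 0 1 * h1
  have hd : U 1 1 = ε * (starRingEnd ℂ) (U 0 0) := by
    rw [hε]
    linear_combination U 1 0 * h2 - U 1 1 * h1
  have hB : (starRingEnd ℂ) (U 0 1) = -((starRingEnd ℂ) ε * U 1 0) := by
    rw [hb]; simp
  have hD : (starRingEnd ℂ) (U 1 1) = (starRingEnd ℂ) ε * U 0 0 := by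
    rw [hd]; simp
  have key : (U * !![(1 : ℂ), 0; 0, ω] * Uᴴ * !![(1 : ℂ), 0; 0, ω^3] * U *
        !![(1 : ℂ), 0; 0, ω^3] * Uᴴ * !![(1 : ℂ), 0; 0, ω] * U) 1 0
      = ω ^ 4 * U 1 0 * ((starRingEnd ℂ) (U 1 0) * U 1 0) ^ 2 := by
    simp only [Matrix.mul_apply, Fin.sum_univ_two, Matrix.conjTranspose_apply,
      Matrix.of_apply, Matrix.cons_val', Matrix.cons_val_zero, Matrix.cons_val_one,
      Matrix.head_cons, Matrix.head_fin_const, Matrix.empty_val', Matrix.cons_val_fin_one,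
      Complex.star_def, mul_zero, zero_mul, mul_one, one_mul, add_zero, zero_add]
    rw [hB, hD, hb, hd]
    linear_combination
      ((U 1 0) + (-1)*(U 1 0)*ε*(starRingEnd ℂ) ε*ω + (U 1 0)*ε*(starRingEnd ℂ) ε*ω^4 + (-1)*(U 1 0)*ε^2*(starRingEnd ℂ) ε^2*ω^7 + (U 1 0)*ε^2*(starRingEnd ℂ) ε^2*ω^8 + (-1)*(U 1 0)^2*(starRingEnd ℂ) (U 1 0) + (U 1 0)^2*(starRingEnd ℂ) (U 1 0)*ω + (U 1 0)^2*(starRingEnd ℂ) (U 1 0)*ω^3 + (U 1 0)^2*(starRingEnd ℂ) (U 1 0)*ε*(starRingEnd ℂ) ε*ω + (-1)*(U 1 0)^2*(starRingEnd ℂ) (U 1 0)*ε*(starRingEnd ℂ) ε*ω^2 + (U 1 0)^2*(starRingEnd ℂ) (U 1 0)*ε*(starRingEnd ℂ) ε*ω^3 + (-2)*(U 1 0)^2*(starRingEnd ℂ) (U 1 0)*ε*(starRingEnd ℂ) ε*ω^4 + (U 1 0)^2*(starRingEnd ℂ) (U 1 0)*ε*(starRingEnd ℂ) ε*ω^5 +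 (-1)*(U 1 0)^2*(starRingEnd ℂ) (U 1 0)*ε*(starRingEnd ℂ) ε*ω^6 + (U 1 0)^2*(starRingEnd ℂ) (U 1 0)*ε*(starRingEnd ℂ) ε*ω^7 + (-1)*(U 1 0)^2*(starRingEnd ℂ) (U 1 0)*ε^2*(starRingEnd ℂ) ε^2*ω^4 + (U 1 0)^2*(starRingEnd ℂ) (U 1 0)*ε^2*(starRingEnd ℂ) ε^2*ω^5 + (U 1 0)^2*(starRingEnd ℂ) (U 1 0)*ε^2*(starRingEnd ℂ) ε^2*ω^7 + (-1)*(U 1 0)^2*(starRingEnd ℂ) (U 1 0)*ε^2*(starRingEnd ℂ) ε^2*ω^8 + (U 0 0)*(U 1 0)*(starRingEnd ℂ) (U 0 0) + (-1)*(U 0 0)*(U 1 0)*(starRingEnd ℂ) (U 0 0)*ε*(starRingEnd ℂ) ε*ω + (U 0 0)*(U 1 0)*(starRingEnd ℂ) (U 0 0)*ε*(starRingEnd ℂ) ε*ω^4 + (-1)*(U 0 0)*(U 1 0)*(starRingEnd ℂ) (U 0 0)*ε^2*(starRingEnd ℂ) ε^2*ω^7 + (U 0 0)*(U 1 0)*(starRingEnd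 ℂ) (U 0 0)*ε^2*(starRingEnd ℂ) ε^2*ω^8) * h1 +
      ((-1)*(U 1 0)*ω + (U 1 0)*ω^4 + (-1)*(U 1 0)*ω^7 + (U 1 0)*ω^8 + (-1)*(U 1 0)*ε*(starRingEnd ℂ) ε*ω^7 + (U 1 0)*ε*(starRingEnd ℂ) ε*ω^8 + (2)*(U 1 0)^2*(starRingEnd ℂ) (U 1 0)*ω + (-1)*(U 1 0)^2*(starRingEnd ℂ) (U 1 0)*ω^2 + (U 1 0)^2*(starRingEnd ℂ) (U 1 0)*ω^3 + (-4)*(U 1 0)^2*(starRingEnd ℂ) (U 1 0)*ω^4 + (2)*(U 1 0)^2*(starRingEnd ℂ) (U 1 0)*ω^5 + (-1)*(U 1 0)^2*(starRingEnd ℂ) (U 1 0)*ω^6 + (3)*(U 1 0)^2*(starRingEnd ℂ) (U 1 0)*ω^7 + (-2)*(U 1 0)^2*(starRingEnd ℂ) (U 1 0)*ω^8 + (-1)*(U 1 0)^2*(starRingEnd ℂ) (U 1 0)*ε*(starRingEnd ℂ) ε*ω^4 + (U 1 0)^2*(starRingEnd ℂ) (U 1 0)*ε*(starRingEnd ℂ)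 ε*ω^5 + (2)*(U 1 0)^2*(starRingEnd ℂ) (U 1 0)*ε*(starRingEnd ℂ) ε*ω^7 + (-2)*(U 1 0)^2*(starRingEnd ℂ) (U 1 0)*ε*(starRingEnd ℂ) ε*ω^8 + (-1)*(U 1 0)^3*(starRingEnd ℂ) (U 1 0)^2*ω + (U 1 0)^3*(starRingEnd ℂ) (U 1 0)^2*ω^2 + (-1)*(U 1 0)^3*(starRingEnd ℂ) (U 1 0)^2*ω^3 + (3)*(U 1 0)^3*(starRingEnd ℂ) (U 1 0)^2*ω^4 + (-2)*(U 1 0)^3*(starRingEnd ℂ) (U 1 0)^2*ω^5 + (U 1 0)^3*(starRingEnd ℂ) (U 1 0)^2*ω^6 + (-2)*(U 1 0)^3*(starRingEnd ℂ) (U 1 0)^2*ω^7 + (U 1 0)^3*(starRingEnd ℂ) (U 1 0)^2*ω^8 + (U 1 0)^3*(starRingEnd ℂ) (U 1 0)^2*ε*(starRingEnd ℂ) ε*ω^4 + (-1)*(U 1 0)^3*(starRingEnd ℂ) (U 1 0)^2*ε*(starRingEnd ℂ) ε*ω^5 + (-1)*(U 1 0)^3*(starRingEnd ℂ) (U 1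 0)^2*ε*(starRingEnd ℂ) ε*ω^7 + (U 1 0)^3*(starRingEnd ℂ) (U 1 0)^2*ε*(starRingEnd ℂ) ε*ω^8) * he +
      ((U 1 0) + (-1)*(U 1 0)*ω^2 + (U 1 0)*ω^4 + (-2)*(U 1 0)^2*(starRingEnd ℂ) (U 1 0) + (U 1 0)^2*(starRingEnd ℂ) (U 1 0)*ω + (2)*(U 1 0)^2*(starRingEnd ℂ) (U 1 0)*ω^2 + (U 1 0)^2*(starRingEnd ℂ) (U 1 0)*ω^3 + (-2)*(U 1 0)^2*(starRingEnd ℂ) (U 1 0)*ω^4 + (U 1 0)^3*(starRingEnd ℂ) (U 1 0)^2 + (-1)*(U 1 0)^3*(starRingEnd ℂ) (U 1 0)^2*ω + (-1)*(U 1 0)^3*(starRingEnd ℂ) (U 1 0)^2*ω^2 + (-1)*(U 1 0)^3*(starRingEnd ℂ) (U 1 0)^2*ω^3 + (U 1 0)^3*(starRingEnd ℂ) (U 1 0)^2*ω^4) * hω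
  rw [key]
  have habsω : ‖ω‖ = 1 := by
    show ‖Complex.exp (Real.pi * Complex.I / 5)‖ = 1
    rw [Complex.norm_exp]
    have hre : (Real.pi * Complex.I / 5 : ℂ).re = 0 := by
      simp [Complex.div_re]
    rw [hre, Real.exp_zero]
  simp only [norm_mul, norm_pow, Complex.norm_conj, habsω]
  ring
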